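/- Let k ≥ 3, let D ⊂ ℝ^k be compact and convex, let W ⊂ ℝ^k be a 2-dimensional linear subspace and E = W^⊥. For e ∈ E set f(e) = μH²((e + W) ∩ D), let ℰ = {e ∈ E : (e + W) ∩ D ≠ ∅}, and let A = sup_{e ∈ ℰ} f(e); assume A > 0. Then there exists a constant C, depending only on k, such that for every ε > 0, μH^{k−2}({e ∈ ℰ : f(e) < ε A}) ≤ C √ε · μH^{k−2}(ℰ). -/

import Mathlib

open MeasureTheory ENNReal

set_option maxHeartbeats 1000000 in
open scoped Pointwise in
private lemma stmt18_aux (k : ℕ) (hk : 3 ≤ k)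
    (D : Set (EuclideanSpace ℝ (Fin k))) (hDc : IsCompact D) (hDconv : Convex ℝ D)
    (W : Submodule ℝ (EuclideanSpace ℝ (Fin k))) (hW2 : Module.finrank ℝ W = 2)
    (𝓔 : Set (EuclideanSpace ℝ (Fin k)))
    (h𝓔 : 𝓔 = {e | e ∈ Wᗮ ∧ ({x | x - e ∈ W} ∩ D).Nonempty})
    (A : ℝ≥0∞) (hA : A = ⨆ e ∈ 𝓔, μH[2] ({x | x - e ∈ W} ∩ D)) (hA0 : 0 < A)
    (ε : ℝ) (hε : 0 < ε) :
    μH[(k : ℝ) - 2] {e ∈ 𝓔 | μH[2] ({x | x - e ∈ W} ∩ D) < ENNReal.ofReal ε * A} ≤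
      ENNReal.ofReal (2 * (k:ℝ) * Real.sqrt ε) * μH[(k : ℝ) - 2] 𝓔 := by
  have hk3 : (3:ℝ) ≤ (k:ℝ) := by exact_mod_cast hk
  set d : ℝ := (k : ℝ) - 2 with hd
  have hd1 : 1 ≤ d := by rw [hd]; linarith
  have hd0 : 0 ≤ d := by linarith
  set ν : EuclideanSpace ℝ (Fin k) → ℝ≥0∞ := fun e => μH[2] ({x | x - e ∈ W} ∩ D) with hν
  set bad : Set (EuclideanSpace ℝ (Fin k)) := {e ∈ 𝓔 | ν e < ENNReal.ofReal ε * A} with hbad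
  have hsqε : 0 < Real.sqrt ε := Real.sqrt_pos.2 hε
  -- trivial case
  by_cases htriv : 1 ≤ 2 * (k:ℝ) * Real.sqrt ε
  · calc μH[d] bad ≤ μH[d] 𝓔 := measure_mono (fun e he => he.1)
      _ = 1 * μH[d] 𝓔 := (one_mul _).symm
      _ ≤ ENNReal.ofReal (2 * (k:ℝ) * Real.sqrt ε) * μH[d] 𝓔 :=
          mul_le_mul_left (ENNReal.one_le_ofReal.2 htriv) _
  push_neg at htriv
  -- infinite-measure case
  by_cases hEfin : μH[d] 𝓔 = ∞
  · rw [hEfin, ENNReal.mul_top (by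
      simp only [ne_eq, ENNReal.ofReal_eq_zero, not_le]
      positivity)]
    exact le_top
  -- main case
  -- 𝓔 as projection image
  have hEeq : 𝓔 = (fun x => ((Wᗮ.orthogonalProjectionOnto x : _) : EuclideanSpace ℝ (Fin k))) '' D := by
    rw [h𝓔]; ext e; constructor
    · rintro ⟨heW, x, hxW, hxD⟩
      refine ⟨x, hxD, ?_⟩
      refine (Submodule.eq_starProjection_of_mem_of_inner_eq_zero (K := Wᗮ) heW ?_ : _)
      intro w hw
      exact (Submodule.mem_orthogonal W w).1 hw (x - e) hxW
    · rintro ⟨x, hxD, rfl⟩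
      refine ⟨(Wᗮ.orthogonalProjectionOnto x).2, ⟨x, ?_, hxD⟩⟩
      have h1 := Submodule.sub_starProjection_mem_orthogonal (K := Wᗮ) x
      rwa [Submodule.orthogonal_orthogonal] at h1
  have hEcompact : IsCompact 𝓔 := by
    rw [hEeq]
    exact hDc.image (continuous_subtype_val.comp (Wᗮ.orthogonalProjectionOnto).continuous)
  have hEconv : Convex ℝ 𝓔 := by
    rw [h𝓔]
    intro e₁ h₁ e₂ h₂ a b ha hb hab
    obtain ⟨p, hpW, hpD⟩ := h₁.2
    obtain ⟨q, hqW, hqD⟩ := h₂.2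
    refine ⟨Wᗮ.add_mem (Wᗮ.smul_mem _ h₁.1) (Wᗮ.smul_mem _ h₂.1),
      ⟨a • p + b • q, ?_, hDconv hpD hqD ha hb hab⟩⟩
    have : a • p + b • q - (a • e₁ + b • e₂) = a • (p - e₁) + b • (q - e₂) := by module
    show _ ∈ W
    rw [this]
    exact W.add_mem (W.smul_mem _ hpW) (W.smul_mem _ hqW)
  -- A is finite
  obtain ⟨R, hR⟩ := hDc.isBounded.subset_closedBall 0
  have hslice : ∀ e ∈ 𝓔, {x | x - e ∈ W} ∩ D ⊆
      e +ᵥ ((↑) '' Metric.closedBall (0:W) R : Set (EuclideanSpace ℝ (Fin k))) := by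
    rw [h𝓔]
    rintro e ⟨heW, -⟩ x ⟨hxW, hxD⟩
    have hxR : ‖x‖ ≤ R := by
      have := hR hxD; rwa [Metric.mem_closedBall, dist_zero_right] at this
    have hin : inner ℝ (x - e) e = (0:ℝ) := (Submodule.mem_orthogonal W e).1 heW (x - e) hxW
    have hpyth : ‖x‖^2 = ‖x - e‖^2 + 2 * inner ℝ (x - e) e + ‖e‖^2 := by
      have h := norm_add_sq_real (x - e) e
      rwa [sub_add_cancel] at h
    have hnorm : ‖x - e‖ ≤ R := by
      nlinarith [norm_nonneg (x - e), norm_nonneg e, norm_nonneg x]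
    refine ⟨(⟨x - e, hxW⟩ : W), ⟨⟨x - e, hxW⟩, ?_, rfl⟩, by simp⟩
    rw [Metric.mem_closedBall, dist_zero_right]
    exact hnorm
  have hB : μH[2] ((↑) '' Metric.closedBall (0:W) R : Set (EuclideanSpace ℝ (Fin k))) < ⊤ := by
    rw [Isometry.hausdorffMeasure_image isometry_subtype_coe (Or.inl (by norm_num))]
    have h2 : (2:ℝ) = ((Module.finrank ℝ W : ℕ) : ℝ) := by rw [hW2]; norm_num
    rw [h2]
    exact (isCompact_closedBall _ _).measure_lt_top
  have hAtop : A ≠ ⊤ := by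
    rw [hA]
    refine ne_of_lt (lt_of_le_of_lt (iSup₂_le fun e he => ?_) hB)
    calc μH[2] ({x | x - e ∈ W} ∩ D)
        ≤ μH[2] (e +ᵥ ((↑) '' Metric.closedBall (0:W) R : Set (EuclideanSpace ℝ (Fin k)))) :=
          measure_mono (hslice e he)
      _ = _ := hausdorffMeasure_vadd _ (Or.inl (by norm_num)) _
  -- pick near-maximal slice
  obtain ⟨x₀, hx₀E, hx₀⟩ : ∃ e ∈ 𝓔, A / 2 < ν e := by
    have h1 : A / 2 < ⨆ e ∈ 𝓔, ν e := by rw [hν, ← hA]; exact ENNReal.half_lt_self hA0.ne' hAtop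
    simpa only [lt_iSup_iff, exists_prop] using h1
  -- the shrinking parameter
  set t : ℝ := Real.sqrt (2 * ε) with ht
  have ht0 : 0 < t := Real.sqrt_pos.2 (by linarith)
  have htsq : t ^ 2 = 2 * ε := Real.sq_sqrt (by linarith)
  have hsqεsq : Real.sqrt ε ^ 2 = ε := Real.sq_sqrt hε.le
  have ht1 : t < 1 := by
    have h6 : Real.sqrt ε < 1/6 := by nlinarith
    have : t ^ 2 < 1 := by nlinarith
    nlinarith
  have h1t : (0:ℝ) < 1 - t := by linarith
  -- key estimate: shrunk points have large slices
  have hkey : ∀ e ∈ 𝓔, ENNReal.ofReal ε * A < ν (t • x₀ + (1 - t) • e) := by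
    intro e he
    have he' := h𝓔 ▸ he
    obtain ⟨a, haW, haD⟩ := he'.2
    have hx₀' := h𝓔 ▸ hx₀E
    have hsub : ((1 - t) • a) +ᵥ (t • ({x | x - x₀ ∈ W} ∩ D)) ⊆
        {x | x - (t • x₀ + (1 - t) • e) ∈ W} ∩ D := by
      intro y hy
      rw [Set.mem_vadd_set] at hy
      obtain ⟨z, hz, rfl⟩ := hy
      rw [Set.mem_smul_set] at hz
      obtain ⟨b, ⟨hbW, hbD⟩, rfl⟩ := hz
      rw [vadd_eq_add]
      constructor
      · show (1 - t) • a + t • b - (t • x₀ + (1 - t) • e) ∈ W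
        have heq : (1 - t) • a + t • b - (t • x₀ + (1 - t) • e)
            = (1 - t) • (a - e) + t • (b - x₀) := by module
        rw [heq]
        exact W.add_mem (W.smul_mem _ haW) (W.smul_mem _ hbW)
      · show (1 - t) • a + t • b ∈ D
        exact hDconv haD hbD (by linarith) ht0.le (by ring)
    calc ENNReal.ofReal ε * A = ENNReal.ofReal t ^ (2:ℝ) * (A / 2) := by
          rw [ENNReal.ofReal_rpow_of_nonneg ht0.le (by norm_num)]
          rw [show t ^ (2:ℝ) = t ^ 2 from Real.rpow_two t, htsq, ENNReal.ofReal_mul (by norm_num),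
            ENNReal.ofReal_ofNat, mul_comm (2:ℝ≥0∞), mul_assoc]
          congr 1
          rw [ENNReal.div_eq_inv_mul, ← mul_assoc, ENNReal.mul_inv_cancel (by norm_num) (by norm_num),
            one_mul]
      _ < ENNReal.ofReal t ^ (2:ℝ) * ν x₀ := by
          refine (ENNReal.mul_lt_mul_iff_right ?_ ?_).2 hx₀
          · simp [ENNReal.ofReal_eq_zero, not_le, ht0, ENNReal.rpow_eq_zero_iff]
          · exact ENNReal.rpow_ne_top_of_nonneg (by norm_num) ENNReal.ofReal_ne_top
      _ = μH[2] (((1 - t) • a) +ᵥ (t • ({x | x - x₀ ∈ W} ∩ D))) := by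
          rw [hausdorffMeasure_vadd _ (Or.inl (by norm_num)) _,
            Measure.hausdorffMeasure_smul₀ (by norm_num : (0:ℝ) ≤ 2) ht0.ne' _,
            ENNReal.smul_def, smul_eq_mul, ENNReal.coe_rpow_of_nonneg _ (by norm_num : (0:ℝ) ≤ 2),
            ← enorm_eq_nnnorm, Real.enorm_eq_ofReal ht0.le]
      _ ≤ ν (t • x₀ + (1 - t) • e) := measure_mono hsub
  -- the shrunk copy of 𝓔
  set K : Set (EuclideanSpace ℝ (Fin k)) := (fun e => t • x₀ + (1 - t) • e) '' 𝓔 with hK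
  have hKcompact : IsCompact K :=
    hEcompact.image (continuous_const.add (continuous_id.const_smul (1 - t)))
  have hKsub : K ⊆ 𝓔 := by
    rintro y ⟨e, he, rfl⟩
    exact hEconv hx₀E he ht0.le h1t.le (by ring)
  have hdisj : Disjoint bad K := by
    rw [Set.disjoint_left]
    rintro y hyb ⟨e, he, rfl⟩
    exact absurd hyb.2 (not_lt.2 (hkey e he).le)
  have hKvadd : K = (t • x₀) +ᵥ ((1 - t) • 𝓔) := by
    ext y
    simp only [hK, Set.mem_image, Set.mem_vadd_set, Set.mem_smul_set]
    constructor
    · rintro ⟨e, he, rfl⟩; exact ⟨(1 - t) • e, ⟨e, he, rfl⟩, rfl⟩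
    · rintro ⟨z, ⟨e, he, rfl⟩, rfl⟩; exact ⟨e, he, rfl⟩
  have hμK : μH[d] K = ENNReal.ofReal ((1 - t) ^ d) * μH[d] 𝓔 := by
    rw [hKvadd, hausdorffMeasure_vadd _ (Or.inl hd0) _,
      Measure.hausdorffMeasure_smul₀ hd0 h1t.ne' _, ENNReal.smul_def, smul_eq_mul,
      ENNReal.coe_rpow_of_nonneg _ hd0, ← enorm_eq_nnnorm, Real.enorm_eq_ofReal h1t.le,
      ENNReal.ofReal_rpow_of_nonneg h1t.le hd0]
  have hsum : μH[d] bad + μH[d] K ≤ μH[d] 𝓔 := by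
    rw [← measure_union hdisj hKcompact.isClosed.measurableSet]
    refine measure_mono ?_
    rintro y (hy | hy)
    · exact hy.1
    · exact hKsub hy
  have hKfin : μH[d] K ≠ ⊤ := by
    rw [hμK]; exact ENNReal.mul_ne_top ENNReal.ofReal_ne_top hEfin
  -- final arithmetic
  have hreal : 1 ≤ 2 * (k:ℝ) * Real.sqrt ε + (1 - t) ^ d := by
    have hbern : 1 + d * (-t) ≤ (1 + (-t)) ^ d :=
      one_add_mul_self_le_rpow_one_add (by linarith) hd1
    have hs2 : Real.sqrt 2 ≤ 2 := by
      nlinarith [Real.sq_sqrt (show (0:ℝ) ≤ 2 by norm_num), Real.sqrt_nonneg 2]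
    have htle : t ≤ 2 * Real.sqrt ε := by
      rw [ht, Real.sqrt_mul (by norm_num) ε]
      nlinarith [Real.sqrt_nonneg ε]
    have hdt : d * t ≤ 2 * (k:ℝ) * Real.sqrt ε := by
      have h1 : d ≤ (k:ℝ) := by rw [hd]; linarith
      nlinarith [Real.sqrt_nonneg ε, ht0.le]
    have : 1 - d * t ≤ (1 - t) ^ d := by
      have h2 : 1 + (-t) = 1 - t := by ring
      have h3 : 1 + d * (-t) = 1 - d * t := by ring
      rw [h2, h3] at hbern
      exact hbern
    linarith
  have hfinal : μH[d] 𝓔 ≤ ENNReal.ofReal (2 * (k:ℝ) * Real.sqrt ε) * μH[d] 𝓔 + μH[d] K := by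
    rw [hμK, ← add_mul]
    calc μH[d] 𝓔 = 1 * μH[d] 𝓔 := (one_mul _).symm
      _ ≤ _ := by
          refine mul_le_mul_left ?_ _
          rw [← ENNReal.ofReal_add (by positivity) (Real.rpow_nonneg h1t.le d)]
          exact ENNReal.one_le_ofReal.2 hreal
  have := hsum.trans hfinal
  rwa [ENNReal.add_le_add_iff_right hKfin] at this



/-- The affine plane through `e` parallel to the 2-dimensional subspace `W`. -/
def planeThrough {k : ℕ} (W : Submodule ℝ (EuclideanSpace ℝ (Fin k)))
    (e : EuclideanSpace ℝ (Fin k)) : Set (EuclideanSpace ℝ (Fin k)) :=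
  {x | x - e ∈ W}

/-- **Small-area slices are rare.** There is a constant `C = C(k)` such that for every compact
convex `D ⊂ ℝ^k`, every 2-dimensional subspace `W` with parameter space `E = Wᗮ`,
`ℰ = {e ∈ E : (e+W) ∩ D ≠ ∅}`, and `A = sup_{e ∈ ℰ} μH²((e+W) ∩ D) > 0`, one has, for every
`ε > 0`, `μH^{k-2}({e ∈ ℰ : μH²((e+W) ∩ D) < ε A}) ≤ C √ε · μH^{k-2}(ℰ)`. -/
theorem stmt18 (k : ℕ) (hk : 3 ≤ k) :
    ∃ C : ℝ, 0 < C ∧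
      ∀ (D : Set (EuclideanSpace ℝ (Fin k))), IsCompact D → Convex ℝ D →
      ∀ (W : Submodule ℝ (EuclideanSpace ℝ (Fin k))), Module.finrank ℝ W = 2 →
      ∀ (𝓔 : Set (EuclideanSpace ℝ (Fin k))),
        𝓔 = {e | e ∈ Wᗮ ∧ (planeThrough W e ∩ D).Nonempty} →
      ∀ (A : ℝ≥0∞), A = ⨆ e ∈ 𝓔, μH[2] (planeThrough W e ∩ D) → 0 < A →
      ∀ ε : ℝ, 0 < ε →
        μH[(k : ℝ) - 2] {e ∈ 𝓔 | μH[2] (planeThrough W e ∩ D) < ENNReal.ofReal ε * A} ≤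
          ENNReal.ofReal (C * Real.sqrt ε) * μH[(k : ℝ) - 2] 𝓔 := by
  refine ⟨2 * (k:ℝ), by positivity, ?_⟩
  intro D hDc hDconv W hW2 𝓔 h𝓔 A hA hA0 ε hε
  exact stmt18_aux k hk D hDc hDconv W hW2 𝓔 h𝓔 A hA hA0 ε hε
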